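/- Let X be a locally compact Hausdorff space and γ : X → X a homeomorphism such that the induced ℤ-action is properly discontinuous (for every compact K ⊆ X, the set { n ∈ ℤ : γ^n(K) ∩ K ≠ ∅ } is finite) and cocompact (there exists a compact K ⊆ X with ⋃_{n ∈ ℤ} γ^n(K) = X). Then there exists a continuous proper function F : X → ℝ (the preimage of every compact subset of ℝ is compact) satisfying F(γ(x)) = F(x) + 1 for all x ∈ X. -/

import Mathlib

open Set

/-- if X is locally compact Hausdorff and γ is a homeomorphism of X whose
generated ℤ-action is properly discontinuous and cocompact, then there is a continuous
proper F : X → ℝ with F(γ(x)) = F(x) + 1. -/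
theorem stmt9 {X : Type*} [TopologicalSpace X] [LocallyCompactSpace X] [T2Space X]
    (γ : X ≃ₜ X)
    (hdisc : ∀ K : Set X, IsCompact K →
      {n : ℤ | (⇑(γ.toEquiv ^ n) '' K ∩ K).Nonempty}.Finite)
    (hcocpt : ∃ K : Set X, IsCompact K ∧ (⋃ n : ℤ, ⇑(γ.toEquiv ^ n) '' K) = Set.univ) :
    ∃ F : X → ℝ, Continuous F ∧
      (∀ K : Set ℝ, IsCompact K → IsCompact (F ⁻¹' K)) ∧
      ∀ x : X, F (γ x) = F x + 1 := by
  classical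
  obtain ⟨K, hKc, hKcov⟩ := hcocpt
  set g : ℤ → X → X := fun n => ⇑(γ.toEquiv ^ n) with hg
  have hgcont : ∀ n : ℤ, Continuous (g n) := by
    intro n
    induction n using Int.induction_on with
    | zero => simp [hg, continuous_id]
    | succ k ih =>
      have he : (γ.toEquiv ^ ((k : ℤ) + 1)) = (γ.toEquiv ^ (k : ℤ)) * γ.toEquiv := by
        rw [zpow_add, zpow_one]
      simp only [hg] at ih ⊢
      rw [he]
      exact ih.comp γ.continuous
    | pred k ih =>
      have he : (γ.toEquiv ^ (-(k : ℤ) - 1)) = (γ.toEquiv ^ (-(k : ℤ))) * γ.toEquiv⁻¹ := by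
        rw [← zpow_neg_one, ← zpow_add]; ring_nf
      simp only [hg] at ih ⊢
      rw [he]
      have hinv : Continuous ⇑(γ.toEquiv⁻¹) := γ.symm.continuous
      exact ih.comp hinv
  have hgadd : ∀ (m n : ℤ) (x : X), g m (g n x) = g (m + n) x := by
    intro m n x; simp only [hg]; rw [zpow_add]; rfl
  have hg1 : ∀ x, g 1 x = γ x := by intro x; simp [hg]
  have hg0 : ∀ x, g 0 x = x := by intro x; simp [hg]
  -- bump function
  obtain ⟨φ, hφ1, -, hφsupp, hφ01⟩ :=
    exists_continuous_one_zero_of_isCompact hKc isClosed_empty (disjoint_empty K)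
  have hφ0 : ∀ y, 0 ≤ φ y := fun y => (hφ01 y).1
  set C : Set X := tsupport ⇑φ ∪ K with hC
  have hCc : IsCompact C := hφsupp.union hKc
  have hmemC : ∀ y : X, φ y ≠ 0 → y ∈ C := fun y hy => Or.inl (subset_tsupport _ hy)
  have hKC : K ⊆ C := subset_union_right
  -- pointwise finite support
  have hfin : ∀ x : X, {n : ℤ | φ (g n x) ≠ 0}.Finite := by
    intro x
    have hD : IsCompact (C ∪ {x}) := hCc.union isCompact_singleton
    refine (hdisc _ hD).subset ?_
    intro n hn
    exact ⟨g n x, ⟨x, Or.inr rfl, rfl⟩, Or.inl (hmemC _ hn)⟩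
  set h : X → ℤ → ℝ := fun x n => φ (g n x) with hh
  set u : X → ℤ → ℝ := fun x n => (-n : ℝ) * φ (g n x) with hu
  have husupp : ∀ x n, h x n = 0 → u x n = 0 := by
    intro x n hn
    simp only [hh] at hn
    simp [hu, hn]
  have hsum_h : ∀ x, Summable (h x) := by
    intro x
    exact summable_of_finite_support ((hfin x).subset (fun n hn => hn))
  have hsum_u : ∀ x, Summable (u x) := by
    intro x
    refine summable_of_finite_support ((hfin x).subset ?_)
    intro n hn
    simp only [Function.mem_support] at hn
    intro hzero
    exact hn (husupp x n (by simpa [hh] using hzero))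
  set S : X → ℝ := fun x => ∑' n : ℤ, h x n with hS
  set T : X → ℝ := fun x => ∑' n : ℤ, u x n with hT
  -- finset covering the support at a point
  have hhs : ∀ x, ∀ n ∉ (hfin x).toFinset, h x n = 0 := by
    intro x n hn
    rw [Set.Finite.mem_toFinset] at hn
    simpa [hh] using not_not.mp (fun hc => hn hc)
  have hus : ∀ x, ∀ n ∉ (hfin x).toFinset, u x n = 0 :=
    fun x n hn => husupp x n (hhs x n hn)
  have hSsum : ∀ x, S x = ∑ n ∈ (hfin x).toFinset, h x n := fun x => tsum_eq_sum (hhs x)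
  have hTsum : ∀ x, T x = ∑ n ∈ (hfin x).toFinset, u x n := fun x => tsum_eq_sum (hus x)
  -- S ≥ 1
  have hcover : ∀ x : X, ∃ m : ℤ, x ∈ g m '' K := by
    intro x
    have hx : x ∈ ⋃ n : ℤ, g n '' K := hKcov.symm ▸ mem_univ x
    simpa using hx
  have hSpos : ∀ x, 1 ≤ S x := by
    intro x
    obtain ⟨m, k, hk, hkx⟩ := hcover x
    have hmm : h x (-m) = 1 := by
      have hx : g (-m) x = k := by
        rw [← hkx, hgadd]
        simpa using hg0 k
      simp only [hh, hx]
      exact hφ1 hk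
    have hmem : -m ∈ (hfin x).toFinset := by
      rw [Set.Finite.mem_toFinset]
      simp only [mem_setOf_eq, hh] at hmm ⊢
      rw [hmm]; norm_num
    rw [hSsum x]
    calc (1 : ℝ) = h x (-m) := hmm.symm
      _ ≤ ∑ n ∈ (hfin x).toFinset, h x n :=
        Finset.single_le_sum (fun n _ => hφ0 (g n x)) hmem
  have hSpos' : ∀ x, 0 < S x := fun x => lt_of_lt_of_le one_pos (hSpos x)
  have hSne : ∀ x, S x ≠ 0 := fun x => (hSpos' x).ne'
  -- equivariance
  have hshift : ∀ x n, h (γ x) n = h x (n + 1) := by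
    intro x n
    simp only [hh]
    rw [← hg1 x, hgadd]
  have hSγ : ∀ x, S (γ x) = S x := by
    intro x
    calc S (γ x) = ∑' n : ℤ, h x (n + 1) := tsum_congr (hshift x)
      _ = S x := (Equiv.addRight (1 : ℤ)).tsum_eq (h x)
  have hTγ : ∀ x, T (γ x) = T x + S x := by
    intro x
    have h1 : ∀ n : ℤ, u (γ x) n = u x (n + 1) + h x (n + 1) := by
      intro n
      simp only [hu, hh]
      rw [← hg1 x, hgadd]
      push_cast
      ring
    calc T (γ x) = ∑' n : ℤ, (u x (n + 1) + h x (n + 1)) := tsum_congr h1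
      _ = ∑' n : ℤ, (u x n + h x n) :=
        (Equiv.addRight (1 : ℤ)).tsum_eq (fun n => u x n + h x n)
      _ = T x + S x := (hsum_u x).tsum_add (hsum_h x)
  -- continuity
  have hhcont : ∀ n : ℤ, Continuous (fun x => h x n) := by
    intro n
    exact φ.continuous.comp (hgcont n)
  have hucont : ∀ n : ℤ, Continuous (fun x => u x n) := by
    intro n
    exact continuous_const.mul (φ.continuous.comp (hgcont n))
  have hloc : ∀ x₀ : X, ∃ s : Finset ℤ, ∃ L ∈ nhds x₀, ∀ x ∈ L, ∀ n ∉ s, h x n = 0 := by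
    intro x₀
    obtain ⟨L, hLc, hLn⟩ := exists_compact_mem_nhds x₀
    have hD := hdisc (L ∪ C) (hLc.union hCc)
    refine ⟨hD.toFinset, L, hLn, ?_⟩
    intro x hx n hn
    by_contra hne
    apply hn
    rw [Set.Finite.mem_toFinset]
    have hne' : φ (g n x) ≠ 0 := by simpa [hh] using hne
    exact ⟨g n x, ⟨x, Or.inl hx, rfl⟩, Or.inr (hmemC _ hne')⟩
  have hScont : Continuous S := by
    rw [continuous_iff_continuousAt]
    intro x₀
    obtain ⟨s, L, hLn, hs⟩ := hloc x₀
    have hev : (fun x => ∑ n ∈ s, h x n) =ᶠ[nhds x₀] S := by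
      filter_upwards [hLn] with x hx
      exact (tsum_eq_sum (hs x hx)).symm
    exact ((continuous_finset_sum s (fun n _ => hhcont n)).continuousAt).congr hev
  have hTcont : Continuous T := by
    rw [continuous_iff_continuousAt]
    intro x₀
    obtain ⟨s, L, hLn, hs⟩ := hloc x₀
    have hev : (fun x => ∑ n ∈ s, u x n) =ᶠ[nhds x₀] T := by
      filter_upwards [hLn] with x hx
      exact (tsum_eq_sum (fun n hn => husupp x n (hs x hx n hn))).symm
    exact ((continuous_finset_sum s (fun n _ => hucont n)).continuousAt).congr hev
  set F : X → ℝ := fun x => T x / S x with hF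
  have hFcont : Continuous F := hTcont.div hScont hSne
  -- the key bound
  set N : ℕ := (hdisc C hCc).toFinset.sup (fun n : ℤ => n.natAbs) with hN
  have keybound : ∀ (m : ℤ) (x : X), x ∈ g m '' K → |F x - m| ≤ (N : ℝ) := by
    intro m x hx
    obtain ⟨k, hk, hkx⟩ := hx
    have hwin : ∀ n : ℤ, h x n ≠ 0 → (n + m).natAbs ≤ N := by
      intro n hn
      have hne' : φ (g n x) ≠ 0 := by simpa [hh] using hn
      have h1 : g n x ∈ C := hmemC _ hne'
      have h2 : g n x ∈ g (n + m) '' C := ⟨k, hKC hk, by rw [← hkx, hgadd]⟩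
      refine Finset.le_sup (f := fun n : ℤ => n.natAbs) ?_
      rw [Set.Finite.mem_toFinset]
      exact ⟨g n x, h2, h1⟩
    have hTb : |T x - m * S x| ≤ (N : ℝ) * S x := by
      rw [hTsum x, hSsum x, Finset.mul_sum, ← Finset.sum_sub_distrib]
      refine (Finset.abs_sum_le_sum_abs _ _).trans ?_
      rw [Finset.mul_sum]
      refine Finset.sum_le_sum ?_
      intro n _
      by_cases hzero : h x n = 0
      · simp [husupp x n hzero, hzero]
      · have hb := hwin n hzero
        have heq : u x n - m * h x n = ((-(n + m) : ℤ) : ℝ) * h x n := by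
          simp only [hu, hh]
          push_cast
          ring
        rw [heq, abs_mul]
        have habs : |((-(n + m) : ℤ) : ℝ)| = ((n + m).natAbs : ℝ) := by
          rw [Nat.cast_natAbs]
          push_cast
          rw [abs_neg]
        rw [habs]
        have hh0 : 0 ≤ h x n := hφ0 (g n x)
        rw [abs_of_nonneg hh0]
        exact mul_le_mul_of_nonneg_right (by exact_mod_cast hb) hh0
    have hdiv : F x - m = (T x - m * S x) / S x := by
      rw [sub_div, mul_div_assoc, div_self (hSne x), mul_one]
    rw [hdiv, abs_div, abs_of_pos (hSpos' x), div_le_iff₀ (hSpos' x)]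
    exact hTb
  refine ⟨F, hFcont, ?_, ?_⟩
  · -- properness
    intro A hA
    obtain ⟨R, hR⟩ : ∃ R : ℝ, ∀ a ∈ A, |a| ≤ R := by
      obtain ⟨R, hRb⟩ := hA.isBounded.subset_closedBall 0
      exact ⟨R, fun a ha => by simpa [Real.dist_eq] using hRb ha⟩
    set B : Set ℤ := {m : ℤ | (m.natAbs : ℝ) ≤ R + N} with hB
    have hBfin : B.Finite := by
      refine (Set.finite_Icc (-(⌈R + (N : ℝ)⌉)) ⌈R + (N : ℝ)⌉).subset ?_
      intro m hm
      simp only [hB, mem_setOf_eq] at hm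
      have h1 : |(m : ℝ)| ≤ R + N := by
        rwa [Nat.cast_natAbs, Int.cast_abs] at hm
      have h2 : |(m : ℝ)| ≤ (⌈R + (N : ℝ)⌉ : ℝ) := h1.trans (Int.le_ceil _)
      have h3 : |m| ≤ ⌈R + (N : ℝ)⌉ := by
        rw [← Int.cast_abs] at h2
        exact_mod_cast h2
      rw [mem_Icc]
      constructor <;> [linarith [neg_abs_le m]; linarith [le_abs_self m]]
    have hsub : F ⁻¹' A ⊆ ⋃ m ∈ B, g m '' C := by
      intro x hx
      obtain ⟨m, hm⟩ := hcover x
      have h1 : |F x - m| ≤ (N : ℝ) := keybound m x hm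
      have h2 : |F x| ≤ R := hR _ hx
      have hmB : m ∈ B := by
        simp only [hB, mem_setOf_eq]
        rw [Nat.cast_natAbs, Int.cast_abs, abs_le]
        rw [abs_le] at h1 h2
        constructor <;> linarith
      refine mem_biUnion hmB ?_
      obtain ⟨k, hk, hkx⟩ := hm
      exact ⟨k, hKC hk, hkx⟩
    have hBc : IsCompact (⋃ m ∈ B, g m '' C) :=
      hBfin.isCompact_biUnion (fun m _ => hCc.image (hgcont m))
    exact hBc.of_isClosed_subset (hA.isClosed.preimage hFcont) hsub
  · -- equivariance
    intro x
    simp only [hF]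
    rw [hTγ, hSγ, add_div, div_self (hSne x)]
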